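/- Let β > 1 and let φ : ℕ → (0,∞) satisfy liminf_{n→∞} φ(n)/n > 1. If x ∈ [0,1) has an infinite β-expansion (ε_n(x) ≠ 0 for infinitely many n), then liminf_{n→∞} (n + ℓ_n(x))/φ(n) < 1. Consequently, the set {x ∈ [0,1) : limsup_{n→∞} (1/φ(n)) log_β(x − ω_n(x)) = −1} contains only points with finite β-expansion and is hence at most countable. -/

import Mathlib

open Filter Real MeasureTheory Set

/-- The β-transformation T_β(x) = βx - ⌊βx⌋. -/
noncomputable def bT (β x : ℝ) : ℝ := β * x - ⌊β * x⌋

/-- The k-th digit (0-based: `bDigit β x k = ε_{k+1}(x)`) of the β-expansion. -/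
noncomputable def bDigit (β x : ℝ) (k : ℕ) : ℤ := ⌊β * ((bT β)^[k] x)⌋

/-- The n-th convergent ω_n(x) = Σ_{k=1}^n ε_k(x)/β^k. -/
noncomputable def bConv (β x : ℝ) (n : ℕ) : ℝ :=
  ∑ k ∈ Finset.range n, (bDigit β x k : ℝ) / β ^ (k + 1)

/-- ℓ_n(x): length of the longest run of zero digits just after the n-th digit. -/
noncomputable def ellRun (β x : ℝ) (n : ℕ) : ℕ :=
  sSup {k : ℕ | ∀ j < k, bDigit β x (n + j) = 0}

/-- r_n(x): maximal length of a run of zeros within the first n digits. -/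
noncomputable def runMax (β x : ℝ) (n : ℕ) : ℕ :=
  sSup {k : ℕ | ∃ i, i + k ≤ n ∧ ∀ j < k, bDigit β x (i + j) = 0}

private lemma bT_fract (β y : ℝ) : bT β y = Int.fract (β * y) := rfl

private lemma iter_mem {β : ℝ} (hβ : 1 < β) {x : ℝ} (hx : x ∈ Set.Ico (0:ℝ) 1) (n : ℕ) :
    (bT β)^[n] x ∈ Set.Ico (0:ℝ) 1 := by
  induction n with
  | zero => exact hx
  | succ n ih =>
    rw [Function.iterate_succ_apply', bT_fract]
    exact ⟨Int.fract_nonneg _, Int.fract_lt_one _⟩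

private lemma digit_nonneg {β : ℝ} (hβ : 1 < β) {x : ℝ} (hx : x ∈ Set.Ico (0:ℝ) 1) (k : ℕ) :
    0 ≤ bDigit β x k := by
  have h0 := (iter_mem hβ hx k).1
  exact Int.floor_nonneg.mpr (by positivity)

private lemma key_id {β : ℝ} (hβ : 1 < β) (x : ℝ) (n : ℕ) :
    x = bConv β x n + (bT β)^[n] x / β ^ n := by
  have hβ0 : (0:ℝ) < β := lt_trans one_pos hβ
  induction n with
  | zero => simp [bConv]
  | succ n ih =>
    have hsplit : bConv β x (n+1) = bConv β x n + (bDigit β x n : ℝ) / β ^ (n+1) := by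
      simp [bConv, Finset.sum_range_succ]
    rw [hsplit, Function.iterate_succ_apply']
    set y := (bT β)^[n] x with hy
    have hd : (bDigit β x n : ℝ) = ((⌊β * y⌋ : ℤ) : ℝ) := rfl
    have hbT : bT β y = β * y - ((⌊β * y⌋ : ℤ) : ℝ) := rfl
    rw [hd, hbT]
    have hne : (β : ℝ) ^ n ≠ 0 := by positivity
    have hne' : (β : ℝ) ^ (n+1) ≠ 0 := by positivity
    have heq : ((⌊β * y⌋ : ℤ) : ℝ) / β ^ (n+1) + (β * y - ((⌊β * y⌋ : ℤ) : ℝ)) / β ^ (n+1)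
        = y / β ^ n := by
      rw [← add_div]
      have : ((⌊β * y⌋ : ℤ) : ℝ) + (β * y - ((⌊β * y⌋ : ℤ) : ℝ)) = β * y := by ring
      rw [this, pow_succ]
      field_simp
    linarith [ih, heq]

/-- Properties of ellRun given an infinite expansion. -/
private lemma ell_spec {β : ℝ} (hβ : 1 < β) {x : ℝ} (hx : x ∈ Set.Ico (0:ℝ) 1)
    (hinf : ∀ N : ℕ, ∃ n ≥ N, bDigit β x n ≠ 0) (n : ℕ) :
    (∀ j < ellRun β x n, bDigit β x (n + j) = 0) ∧ bDigit β x (n + ellRun β x n) ≠ 0 := by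
  set S : Set ℕ := {k : ℕ | ∀ j < k, bDigit β x (n + j) = 0} with hS
  have hℓ : ellRun β x n = sSup S := rfl
  obtain ⟨m, hm, hmne⟩ := hinf n
  have hbdd : BddAbove S := by
    refine ⟨m - n, fun k hk => ?_⟩
    by_contra hkm
    push_neg at hkm
    have := hk (m - n) hkm
    rw [Nat.add_sub_cancel' hm] at this
    exact hmne this
  have hne : S.Nonempty := ⟨0, by intro j hj; omega⟩
  have hmem : ellRun β x n ∈ S := by rw [hℓ]; exact Nat.sSup_mem hne hbdd
  refine ⟨hmem, fun hzero => ?_⟩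
  have hmem1 : ellRun β x n + 1 ∈ S := by
    intro j hj
    rcases Nat.lt_succ_iff_lt_or_eq.mp hj with h' | h'
    · exact hmem j h'
    · rw [h']; exact hzero
  have hle := le_csSup hbdd hmem1
  rw [← hℓ] at hle
  omega

/-- Lower and upper bound on x - ω_n. -/
private lemma gap_bounds {β : ℝ} (hβ : 1 < β) {x : ℝ} (hx : x ∈ Set.Ico (0:ℝ) 1)
    (hinf : ∀ N : ℕ, ∃ n ≥ N, bDigit β x n ≠ 0) (n : ℕ) :
    (β ^ (n + ellRun β x n + 1))⁻¹ ≤ x - bConv β x n ∧ x - bConv β x n ≤ 1 := by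
  have hβ0 : (0:ℝ) < β := lt_trans one_pos hβ
  set ℓ := ellRun β x n with hℓ
  obtain ⟨hz, hnz⟩ := ell_spec hβ hx hinf n
  rw [← hℓ] at hz hnz
  have hconv : bConv β x (n + ℓ) = bConv β x n := by
    rw [bConv, bConv, Finset.sum_range_add]
    have : ∑ k ∈ Finset.range ℓ, (bDigit β x (n + k) : ℝ) / β ^ (n + k + 1) = 0 := by
      apply Finset.sum_eq_zero
      intro k hk
      rw [hz k (Finset.mem_range.mp hk)]
      simp
    rw [this, add_zero]
  have hkey := key_id hβ x (n + ℓ)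
  have hkey' := key_id hβ x n
  constructor
  · have h1 : (1 : ℤ) ≤ bDigit β x (n + ℓ) := by
      have := digit_nonneg hβ hx (n + ℓ)
      omega
    have h1' : (1 : ℝ) ≤ β * (bT β)^[n + ℓ] x := by
      have := Int.le_floor.mp h1
      exact_mod_cast this
    have hT : (β : ℝ)⁻¹ ≤ (bT β)^[n + ℓ] x := by
      rw [inv_le_iff_one_le_mul₀ hβ0]
      linarith [h1']
    have heq : x - bConv β x n = (bT β)^[n + ℓ] x / β ^ (n + ℓ) := by
      rw [← hconv]; linarith [hkey]
    rw [heq]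
    have hppos : (0:ℝ) < β ^ (n + ℓ) := pow_pos hβ0 _
    calc (β ^ (n + ℓ + 1))⁻¹ = β⁻¹ / β ^ (n + ℓ) := by
          rw [pow_succ, mul_inv, div_eq_mul_inv]; ring
      _ ≤ (bT β)^[n + ℓ] x / β ^ (n + ℓ) := by gcongr
  · have hT1 : (bT β)^[n] x < 1 := (iter_mem hβ hx n).2
    have hT0 : 0 ≤ (bT β)^[n] x := (iter_mem hβ hx n).1
    have : x - bConv β x n = (bT β)^[n] x / β ^ n := by linarith [hkey']
    rw [this]
    calc (bT β)^[n] x / β ^ n ≤ (bT β)^[n] x := by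
          apply div_le_self hT0 (one_le_pow₀ hβ.le)
      _ ≤ 1 := hT1.le

theorem stmt8 (β : ℝ) (hβ : 1 < β) (φ : ℕ → ℝ) (hφ : ∀ n, 0 < φ n)
    (h : 1 < Filter.liminf (fun n : ℕ => φ n / n) Filter.atTop) :
    (∀ x ∈ Set.Ico (0:ℝ) 1, (∀ N : ℕ, ∃ n ≥ N, bDigit β x n ≠ 0) →
      Filter.liminf (fun n : ℕ => ((n : ℝ) + ellRun β x n) / φ n) Filter.atTop < 1) ∧
    Set.Countable {x ∈ Set.Ico (0:ℝ) 1 |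
      Filter.limsup (fun n : ℕ => Real.logb β (x - bConv β x n) / φ n) Filter.atTop = -1} := by
  have hβ0 : (0:ℝ) < β := lt_trans one_pos hβ
  -- Step A: from the liminf hypothesis, get c > 1 with φ n / n ≥ c eventually.
  obtain ⟨c, hc1, hcle⟩ : ∃ c : ℝ, 1 < c ∧ ∀ᶠ n : ℕ in atTop, c ≤ φ n / n := by
    set S : Set ℝ := {a | ∀ᶠ n : ℕ in atTop, a ≤ φ n / n} with hSdef
    have hLeq : Filter.liminf (fun n : ℕ => φ n / n) Filter.atTop = sSup S := Filter.liminf_eq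
    by_cases hbdd : BddAbove S
    · have hSne : S.Nonempty := ⟨0, Eventually.of_forall fun n => div_nonneg (hφ n).le (Nat.cast_nonneg n)⟩
      obtain ⟨c0, hc0lt⟩ := exists_between h
      rw [hLeq] at hc0lt
      obtain ⟨a, haS, hca⟩ := exists_lt_of_lt_csSup hSne hc0lt.2
      exact ⟨c0, hc0lt.1, haS.mono fun n hn => le_trans hca.le hn⟩
    · rw [hLeq, Real.sSup_of_not_bddAbove hbdd] at h
      norm_num at h
  -- Step B: key frequent bound for points with infinite expansion.
  have helper : ∀ x ∈ Set.Ico (0:ℝ) 1, (∀ N : ℕ, ∃ n ≥ N, bDigit β x n ≠ 0) →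
      ∃ c' : ℝ, c' < 1 ∧ ∃ᶠ n : ℕ in atTop,
        ((n : ℝ) + (ellRun β x n : ℝ) + 1) ≤ c' * φ n := by
    intro x hx hinf
    have h1c : (1:ℝ)/c < 1 := by
      rw [div_lt_one (lt_trans one_pos hc1)]; exact hc1
    obtain ⟨c', hcc', hc'1⟩ := exists_between h1c
    refine ⟨c', hc'1, ?_⟩
    have hcc'' : 1 < c' * c := by
      rw [div_lt_iff₀ (lt_trans one_pos hc1)] at hcc'
      linarith
    obtain ⟨N0, hN0⟩ := exists_nat_ge (1 / (c' * c - 1))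
    have hev : ∀ᶠ n : ℕ in atTop, ((n : ℝ) + 1) ≤ c' * φ n := by
      filter_upwards [hcle, eventually_ge_atTop (max 1 N0)] with n hn hn'
      have hn1 : 1 ≤ n := le_trans (le_max_left _ _) hn'
      have hnN0 : (N0 : ℝ) ≤ n := by exact_mod_cast le_trans (le_max_right _ _) hn'
      have hnpos : (0:ℝ) < n := by exact_mod_cast hn1
      have hφn : c * n ≤ φ n := by
        rw [le_div_iff₀ hnpos] at hn
        linarith
      have h2 : (n : ℝ) + 1 ≤ c' * (c * n) := by
        have h3 : 1 / (c' * c - 1) ≤ (n : ℝ) := le_trans hN0 hnN0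
        have h4 : (1:ℝ) ≤ (c' * c - 1) * n := by
          rw [div_le_iff₀ (by linarith : (0:ℝ) < c' * c - 1)] at h3
          linarith
        nlinarith
      have hc'0 : 0 < c' := lt_trans (by positivity) hcc'
      calc ((n : ℝ) + 1) ≤ c' * (c * n) := h2
        _ ≤ c' * φ n := by nlinarith
    have hfreq : ∃ᶠ n : ℕ in atTop, bDigit β x n ≠ 0 := by
      rw [frequently_atTop]
      exact hinf
    apply (hfreq.and_eventually hev).mono
    rintro n ⟨hd, hb⟩
    have hℓ0 : ellRun β x n = 0 := by
      have hSeq : {k : ℕ | ∀ j < k, bDigit β x (n + j) = 0} = {0} := by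
        ext k
        simp only [Set.mem_setOf_eq, Set.mem_singleton_iff]
        constructor
        · intro hk
          by_contra hk0
          have := hk 0 (Nat.pos_of_ne_zero hk0)
          rw [add_zero] at this
          exact hd this
        · rintro rfl j hj; omega
      rw [ellRun, hSeq, csSup_singleton]
    rw [hℓ0]
    simpa using hb
  constructor
  -- Part 1
  · intro x hx hinf
    obtain ⟨c', hc'1, hfreq⟩ := helper x hx hinf
    refine lt_of_le_of_lt ?_ hc'1
    apply Filter.liminf_le_of_frequently_le
    · apply hfreq.mono
      intro n hn
      rw [div_le_iff₀ (hφ n)]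
      have hℓ : (0:ℝ) ≤ (ellRun β x n : ℝ) := by positivity
      linarith
    · exact isBoundedUnder_of ⟨0, fun n => div_nonneg (by positivity) (hφ n).le⟩
  -- Part 2
  · set F : List ℤ → ℝ := fun L =>
      ∑ k ∈ Finset.range L.length, ((L.getD k 0 : ℤ) : ℝ) / β ^ (k + 1) with hF
    apply Set.Countable.mono _ (Set.countable_range F)
    rintro x ⟨hx, hlim⟩
    -- x must have a finite expansion
    have hfin : ∃ N : ℕ, ∀ n ≥ N, bDigit β x n = 0 := by
      by_contra hc
      push_neg at hc
      have hinf : ∀ N : ℕ, ∃ n ≥ N, bDigit β x n ≠ 0 := hc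
      obtain ⟨c', hc'1, hfreq⟩ := helper x hx hinf
      have hfreq2 : ∃ᶠ n : ℕ in atTop,
          -c' ≤ Real.logb β (x - bConv β x n) / φ n := by
        apply hfreq.mono
        intro n hn
        obtain ⟨hlow, hup⟩ := gap_bounds hβ hx hinf n
        have hpos : (0:ℝ) < (β ^ (n + ellRun β x n + 1))⁻¹ := by positivity
        have hlog : -((n : ℝ) + (ellRun β x n : ℝ) + 1) ≤ Real.logb β (x - bConv β x n) := by
          have := (Real.logb_le_logb hβ hpos (lt_of_lt_of_le hpos hlow)).mpr hlow
          rw [Real.logb_inv, Real.logb_pow, Real.logb_self_eq_one hβ] at this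
          push_cast at this
          linarith
        rw [le_div_iff₀ (hφ n)]
        calc -c' * φ n = -(c' * φ n) := by ring
          _ ≤ -((n : ℝ) + (ellRun β x n : ℝ) + 1) := by linarith
          _ ≤ Real.logb β (x - bConv β x n) := hlog
      have hbound : IsBoundedUnder (· ≤ ·) atTop
          (fun n : ℕ => Real.logb β (x - bConv β x n) / φ n) := by
        apply isBoundedUnder_of
        refine ⟨0, fun n => ?_⟩
        obtain ⟨hlow, hup⟩ := gap_bounds hβ hx hinf n
        have hpos : (0:ℝ) < x - bConv β x n :=
          lt_of_lt_of_le (by positivity) hlow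
        exact div_nonpos_of_nonpos_of_nonneg
          (Real.logb_nonpos hβ hpos.le hup) (hφ n).le
      have := Filter.le_limsup_of_frequently_le hfreq2 hbound
      rw [hlim] at this
      linarith
    obtain ⟨N, hN⟩ := hfin
    -- T^N x = 0
    have hTN : (bT β)^[N] x = 0 := by
      set t := (bT β)^[N] x with ht
      have ht0 : 0 ≤ t := (iter_mem hβ hx N).1
      have hiter : ∀ m : ℕ, (bT β)^[N + m] x = β ^ m * t := by
        intro m
        induction m with
        | zero => simp [ht]
        | succ m ih =>
          have : N + (m + 1) = (N + m) + 1 := by ring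
          rw [this, Function.iterate_succ_apply', ih, bT_fract]
          have hfl : ⌊β * (β ^ m * t)⌋ = bDigit β x (N + m) := by
            rw [bDigit, ih]
          rw [Int.fract, hfl, hN (N + m) (by omega)]
          push_cast
          ring
      by_contra ht0'
      have htpos : 0 < t := lt_of_le_of_ne ht0 (Ne.symm ht0')
      obtain ⟨m, hm⟩ := pow_unbounded_of_one_lt (1 / t) hβ
      have : (bT β)^[N + m] x < 1 := (iter_mem hβ hx (N + m)).2
      rw [hiter m] at this
      rw [div_lt_iff₀ htpos] at hm
      nlinarith
    have hxconv : x = bConv β x N := by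
      have := key_id hβ x N
      rw [hTN] at this
      simpa using this
    -- x is in the range of F
    refine ⟨List.ofFn (fun k : Fin N => bDigit β x k), ?_⟩
    have hFL : F (List.ofFn (fun k : Fin N => bDigit β x k)) = bConv β x N := by
      rw [hF]
      simp only [List.length_ofFn]
      rw [bConv]
      apply Finset.sum_congr rfl
      intro k hk
      have hkN : k < N := Finset.mem_range.mp hk
      congr 1
      rw [List.getD_eq_getElem?_getD, List.getElem?_ofFn]
      simp [List.ofFnNthVal, hkN]
    rw [hFL]
    exact hxconv.symm
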